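/- Let A = (A_1,...,A_d) be a commuting d-tuple of bounded Hilbert space operators and suppose λ = (λ_1,...,λ_d) belongs to the joint approximate point spectrum of A, witnessed by unit vectors x_n with ‖(A_i − λ_i)x_n‖ → 0 for all i. If δ^m_{A*,A}(I) = 0, then (Σ_{i=1}^d conj(λ_i) − Σ_{i=1}^d λ_i)^m = 0, hence Σ_{i=1}^d λ_i is real. -/

import Mathlib

open ContinuousLinearMap Filter Topology

theorem stmt8 {H : Type*} [NormedAddCommGroup H] [InnerProductSpace ℂ H] [CompleteSpace H]
    {d : ℕ} (A : Fin d → (H →L[ℂ] H))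
    (hA : ∀ i j, A i * A j = A j * A i)
    (lam : Fin d → ℂ) (x : ℕ → H)
    (hx : ∀ n, ‖x n‖ = 1)
    (hconv : ∀ i, Tendsto (fun n => ‖(A i) (x n) - lam i • x n‖) atTop (𝓝 0))
    (m : ℕ) (hm : 0 < m)
    (hsym : ∑ j ∈ Finset.range (m + 1),
        ((-1 : ℂ) ^ j * (m.choose j : ℂ)) •
          ((adjoint (∑ i, A i)) ^ (m - j) * (∑ i, A i) ^ j) = 0) :
    ((∑ i, (starRingEnd ℂ) (lam i)) - ∑ i, lam i) ^ m = 0 ∧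
      ∃ r : ℝ, (∑ i, lam i) = (r : ℂ) := by
  classical
  set S : H →L[ℂ] H := ∑ i, A i with hS
  set μ : ℂ := ∑ i, lam i with hμ
  -- Step 1: S x n - μ • x n → 0
  have hS0 : Tendsto (fun n => ‖S (x n) - μ • x n‖) atTop (𝓝 0) := by
    have hle : ∀ n, ‖S (x n) - μ • x n‖ ≤ ∑ i, ‖(A i) (x n) - lam i • x n‖ := by
      intro n
      have : S (x n) - μ • x n = ∑ i, ((A i) (x n) - lam i • x n) := by
        simp [hS, hμ, ContinuousLinearMap.sum_apply, Finset.sum_sub_distrib, Finset.sum_smul]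
      rw [this]
      exact norm_sum_le _ _
    have hsum : Tendsto (fun n => ∑ i, ‖(A i) (x n) - lam i • x n‖) atTop (𝓝 0) := by
      have := tendsto_finset_sum (Finset.univ : Finset (Fin d))
        (fun i _ => hconv i)
      simpa using this
    exact squeeze_zero (fun n => norm_nonneg _) hle hsum
  -- Step 2: powers
  have hpow : ∀ k : ℕ, Tendsto (fun n => ‖(S ^ k) (x n) - μ ^ k • x n‖) atTop (𝓝 0) := by
    intro k
    induction k with
    | zero => simp
    | succ k ih =>
      have key : ∀ n, (S ^ (k+1)) (x n) - μ ^ (k+1) • x n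
          = S ((S ^ k) (x n) - μ ^ k • x n) + μ ^ k • (S (x n) - μ • x n) := by
        intro n
        have : (S ^ (k+1)) (x n) = S ((S ^ k) (x n)) := by
          rw [pow_succ']; rfl
        rw [this]
        simp [smul_sub, map_sub, smul_smul, pow_succ]
      have h1 : Tendsto (fun n => ‖S ((S ^ k) (x n) - μ ^ k • x n)‖) atTop (𝓝 0) := by
        have hle : ∀ n, ‖S ((S ^ k) (x n) - μ ^ k • x n)‖ ≤ ‖S‖ * ‖(S ^ k) (x n) - μ ^ k • x n‖ :=
          fun n => S.le_opNorm _
        have := ih.const_mul ‖S‖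
        rw [mul_zero] at this
        exact squeeze_zero (fun n => norm_nonneg _) hle this
      have h2 : Tendsto (fun n => ‖μ ^ k • (S (x n) - μ • x n)‖) atTop (𝓝 0) := by
        simp only [norm_smul]
        have := hS0.const_mul ‖μ ^ k‖
        rw [mul_zero] at this
        exact this
      have hle : ∀ n, ‖(S ^ (k+1)) (x n) - μ ^ (k+1) • x n‖
          ≤ ‖S ((S ^ k) (x n) - μ ^ k • x n)‖ + ‖μ ^ k • (S (x n) - μ • x n)‖ := by
        intro n; rw [key n]; exact norm_add_le _ _
      have hsum := h1.add h2
      rw [add_zero] at hsum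
      exact squeeze_zero (fun n => norm_nonneg _) hle hsum
  -- Step 3: inner products converge
  have hinner : ∀ a b : ℕ, Tendsto
      (fun n => (inner ℂ ((S ^ a) (x n)) ((S ^ b) (x n)) : ℂ)) atTop
      (𝓝 ((starRingEnd ℂ) (μ ^ a) * μ ^ b)) := by
    intro a b
    have key : ∀ n, (inner ℂ ((S ^ a) (x n)) ((S ^ b) (x n)) : ℂ)
        = inner ℂ ((S ^ a) (x n) - μ ^ a • x n) ((S ^ b) (x n))
          + (starRingEnd ℂ) (μ ^ a) * inner ℂ (x n) ((S ^ b) (x n) - μ ^ b • x n)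
          + (starRingEnd ℂ) (μ ^ a) * μ ^ b * inner ℂ (x n) (x n) := by
      intro n
      rw [inner_sub_left, inner_sub_right]
      simp [inner_smul_left, inner_smul_right]
      ring
    simp only [key]
    have hxn : ∀ n, (inner ℂ (x n) (x n) : ℂ) = 1 := by
      intro n
      rw [inner_self_eq_norm_sq_to_K, hx n]
      norm_num
    have h1 : Tendsto (fun n => (inner ℂ ((S ^ a) (x n) - μ ^ a • x n) ((S ^ b) (x n)) : ℂ))
        atTop (𝓝 0) := by
      apply tendsto_zero_iff_norm_tendsto_zero.mpr
      have hle : ∀ n, ‖(inner ℂ ((S ^ a) (x n) - μ ^ a • x n) ((S ^ b) (x n)) : ℂ)‖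
          ≤ ‖(S ^ a) (x n) - μ ^ a • x n‖ * ‖S ^ b‖ := by
        intro n
        calc ‖(inner ℂ ((S ^ a) (x n) - μ ^ a • x n) ((S ^ b) (x n)) : ℂ)‖
            ≤ ‖(S ^ a) (x n) - μ ^ a • x n‖ * ‖(S ^ b) (x n)‖ := norm_inner_le_norm _ _
          _ ≤ ‖(S ^ a) (x n) - μ ^ a • x n‖ * ‖S ^ b‖ := by
              apply mul_le_mul_of_nonneg_left _ (norm_nonneg _)
              calc ‖(S ^ b) (x n)‖ ≤ ‖S ^ b‖ * ‖x n‖ := (S ^ b).le_opNorm _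
                _ = ‖S ^ b‖ := by rw [hx n, mul_one]
      have := (hpow a).mul_const ‖S ^ b‖
      rw [zero_mul] at this
      exact squeeze_zero (fun n => norm_nonneg _) hle this
    have h2 : Tendsto (fun n =>
        (starRingEnd ℂ) (μ ^ a) * (inner ℂ (x n) ((S ^ b) (x n) - μ ^ b • x n) : ℂ))
        atTop (𝓝 0) := by
      have h2' : Tendsto (fun n => (inner ℂ (x n) ((S ^ b) (x n) - μ ^ b • x n) : ℂ))
          atTop (𝓝 0) := by
        apply tendsto_zero_iff_norm_tendsto_zero.mpr
        have hle : ∀ n, ‖(inner ℂ (x n) ((S ^ b) (x n) - μ ^ b • x n) : ℂ)‖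
            ≤ ‖(S ^ b) (x n) - μ ^ b • x n‖ := by
          intro n
          calc ‖(inner ℂ (x n) ((S ^ b) (x n) - μ ^ b • x n) : ℂ)‖
              ≤ ‖x n‖ * ‖(S ^ b) (x n) - μ ^ b • x n‖ := norm_inner_le_norm _ _
            _ = ‖(S ^ b) (x n) - μ ^ b • x n‖ := by rw [hx n, one_mul]
        exact squeeze_zero (fun n => norm_nonneg _) hle (hpow b)
      have := h2'.const_mul ((starRingEnd ℂ) (μ ^ a))
      rwa [mul_zero] at this
    have h3 : Tendsto (fun n => (starRingEnd ℂ) (μ ^ a) * μ ^ b * (inner ℂ (x n) (x n) : ℂ))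
        atTop (𝓝 ((starRingEnd ℂ) (μ ^ a) * μ ^ b)) := by
      simp only [hxn, mul_one]
      exact tendsto_const_nhds
    have := (h1.add h2).add h3
    simpa using this
  -- Step 4: the scalar sequence is 0 and converges to (conj μ - μ)^m
  have hzero : ∀ n : ℕ, (∑ j ∈ Finset.range (m + 1),
      ((-1 : ℂ) ^ j * (m.choose j : ℂ)) *
        inner ℂ ((S ^ (m - j)) (x n)) ((S ^ j) (x n))) = 0 := by
    intro n
    have := congrArg (fun T : H →L[ℂ] H => (inner ℂ (x n) (T (x n)) : ℂ)) hsym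
    simp only [ContinuousLinearMap.sum_apply, ContinuousLinearMap.smul_apply,
      ContinuousLinearMap.mul_apply, inner_sum, inner_smul_right,
      ContinuousLinearMap.zero_apply, inner_zero_right] at this
    rw [← this]
    apply Finset.sum_congr rfl
    intro j hj
    congr 1
    have hadj : (adjoint S) ^ (m - j) = adjoint (S ^ (m - j)) := by
      rw [← ContinuousLinearMap.star_eq_adjoint, ← ContinuousLinearMap.star_eq_adjoint,
        ← star_pow]
    rw [hadj, ContinuousLinearMap.adjoint_inner_right]
  have hlim : Tendsto (fun n => (∑ j ∈ Finset.range (m + 1),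
      ((-1 : ℂ) ^ j * (m.choose j : ℂ)) *
        inner ℂ ((S ^ (m - j)) (x n)) ((S ^ j) (x n)))) atTop
      (𝓝 (∑ j ∈ Finset.range (m + 1),
        ((-1 : ℂ) ^ j * (m.choose j : ℂ)) *
          ((starRingEnd ℂ) (μ ^ (m - j)) * μ ^ j))) := by
    apply tendsto_finset_sum
    intro j _
    exact (hinner (m - j) j).const_mul _
  have heq0 : (∑ j ∈ Finset.range (m + 1),
      ((-1 : ℂ) ^ j * (m.choose j : ℂ)) *
        ((starRingEnd ℂ) (μ ^ (m - j)) * μ ^ j)) = 0 := by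
    have : Tendsto (fun _ : ℕ => (0 : ℂ)) atTop (𝓝 (∑ j ∈ Finset.range (m + 1),
        ((-1 : ℂ) ^ j * (m.choose j : ℂ)) *
          ((starRingEnd ℂ) (μ ^ (m - j)) * μ ^ j))) := by
      convert hlim using 1
      funext n
      exact (hzero n).symm
    exact (tendsto_nhds_unique tendsto_const_nhds this).symm
  -- Step 5: binomial identity
  have hbinom : ((starRingEnd ℂ) μ - μ) ^ m = ∑ j ∈ Finset.range (m + 1),
      ((-1 : ℂ) ^ j * (m.choose j : ℂ)) *
        ((starRingEnd ℂ) (μ ^ (m - j)) * μ ^ j) := by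
    rw [sub_pow]
    rw [← Finset.sum_range_reflect]
    simp only [Nat.add_sub_cancel]
    apply Finset.sum_congr rfl
    intro j hj
    rw [Finset.mem_range] at hj
    have hj' : j ≤ m := Nat.lt_succ_iff.mp hj
    rw [Nat.choose_symm hj']
    have h1 : m - (m - j) = j := Nat.sub_sub_self hj'
    rw [h1, map_pow]
    have hsign : ((-1 : ℂ)) ^ (m - j + m) = (-1) ^ j := by
      have : m - j + m = j + 2 * (m - j) := by omega
      rw [this, pow_add, pow_mul]
      simp
    rw [hsign]
    ring
  have hμconj : (starRingEnd ℂ) μ = ∑ i, (starRingEnd ℂ) (lam i) := by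
    simp [hμ, map_sum]
  have hmain : ((∑ i, (starRingEnd ℂ) (lam i)) - ∑ i, lam i) ^ m = 0 := by
    rw [← hμconj, ← hμ, hbinom, heq0]
  refine ⟨hmain, ?_⟩
  have hc : (starRingEnd ℂ) μ - μ = 0 := by
    have h := hmain
    rw [← hμconj, ← hμ] at h
    exact pow_eq_zero_iff hm.ne' |>.mp h
  have : (starRingEnd ℂ) μ = μ := by linear_combination hc
  exact ⟨μ.re, (Complex.conj_eq_iff_re.mp this).symm⟩
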